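/- Let n ≥ 1 and let V : ℝ^n → ℝ be quasiconvex on [0,1]^n. Let ū = (ū_1, …, ū_n) ∈ (0,1]^n be such that V(u) < V(ū) for every point u ∈ [0,1]^n with u ≠ ū whose coordinates satisfy u_i = ū_i or u_i = 0 for each i from 1 to n. Then V(u') ≥ V(ū) for every u' ∈ [0,1]^n with u' ≥ ū (coordinatewise). -/

import Mathlib

lemma quasiconvex_key_lemma (n : ℕ) (V : (Fin n → ℝ) → ℝ)
    (hV : ∀ x y : Fin n → ℝ, (∀ i, x i ∈ Set.Icc (0:ℝ) 1) → (∀ i, y i ∈ Set.Icc (0:ℝ) 1) →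
      ∀ l : ℝ, 0 ≤ l → l ≤ 1 → V (l • x + (1 - l) • y) ≤ max (V x) (V y))
    (ubar : Fin n → ℝ) (hubar : ∀ i, 0 < ubar i ∧ ubar i ≤ 1)
    (hmax : ∀ u : Fin n → ℝ, (∀ i, u i ∈ Set.Icc (0:ℝ) 1) → u ≠ ubar →
      (∀ i, u i = ubar i ∨ u i = 0) → V u < V ubar) :
    ∀ m : ℕ, ∀ u : Fin n → ℝ, (∀ i, 0 ≤ u i ∧ u i ≤ ubar i) → (∃ j, u j = 0) →
      (Finset.univ.filter (fun i => u i ≠ 0 ∧ u i ≠ ubar i)).card ≤ m → V u < V ubar := by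
  intro m
  induction m with
  | zero =>
    intro u hu hex hcard
    obtain ⟨j, hj⟩ := hex
    have hall : ∀ i, u i = ubar i ∨ u i = 0 := by
      intro i
      by_contra h
      push_neg at h
      have hi : i ∈ Finset.univ.filter (fun i => u i ≠ 0 ∧ u i ≠ ubar i) := by
        simp [h.1, h.2]
      have := Finset.card_pos.mpr ⟨i, hi⟩
      omega
    exact hmax u (fun i => ⟨(hu i).1, (hu i).2.trans (hubar i).2⟩)
      (fun h => (hubar j).1.ne' (h ▸ hj)) hall
  | succ m ih =>
    intro u hu hex hcard
    by_cases h : ∃ k, u k ≠ 0 ∧ u k ≠ ubar k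
    · obtain ⟨k, hk0, hkub⟩ := h
      obtain ⟨j, hj⟩ := hex
      have hjk : j ≠ k := fun h => hk0 (h ▸ hj)
      set a := Function.update u k (ubar k) with ha_def
      set b := Function.update u k (0:ℝ) with hb_def
      have huk_pos : 0 < u k := lt_of_le_of_ne (hu k).1 (Ne.symm hk0)
      have huk_lt : u k < ubar k := lt_of_le_of_ne (hu k).2 hkub
      set l := u k / ubar k with hl_def
      have hl0 : 0 < l := div_pos huk_pos (hubar k).1
      have hl1 : l < 1 := (div_lt_one (hubar k).1).mpr huk_lt
      have hcomb : u = l • a + (1 - l) • b := by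
        funext i
        by_cases hik : i = k
        · subst hik
          simp [ha_def, hb_def, hl_def, div_mul_cancel₀, (hubar i).1.ne']
        · simp [ha_def, hb_def, Function.update_of_ne hik]
          ring
      have ha_mem : ∀ i, 0 ≤ a i ∧ a i ≤ ubar i := by
        intro i
        by_cases hik : i = k
        · subst hik; simp [ha_def]; exact (hubar i).1.le
        · simpa [ha_def, Function.update_of_ne hik] using hu i
      have hb_mem : ∀ i, 0 ≤ b i ∧ b i ≤ ubar i := by
        intro i
        by_cases hik : i = k
        · subst hik; simp [hb_def]; exact (hubar i).1.le
        · simpa [hb_def, Function.update_of_ne hik] using hu i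
      have hkmem : k ∈ Finset.univ.filter (fun i => u i ≠ 0 ∧ u i ≠ ubar i) := by
        simp [hk0, hkub]
      have hcard_sub : ∀ c : Fin n → ℝ, c = Function.update u k (c k) →
          (Finset.univ.filter (fun i => c i ≠ 0 ∧ c i ≠ ubar i)).card ≤ m →
          True := fun _ _ _ => trivial
      have hsub : ∀ (c : Fin n → ℝ), (∀ i, i ≠ k → c i = u i) → (c k = 0 ∨ c k = ubar k) →
          (Finset.univ.filter (fun i => c i ≠ 0 ∧ c i ≠ ubar i)).card ≤ m := by
        intro c hc hck
        have hss : (Finset.univ.filter (fun i => c i ≠ 0 ∧ c i ≠ ubar i)) ⊆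
            (Finset.univ.filter (fun i => u i ≠ 0 ∧ u i ≠ ubar i)).erase k := by
          intro i hi
          simp only [Finset.mem_filter, Finset.mem_univ, true_and] at hi
          have hik : i ≠ k := by
            rintro rfl
            rcases hck with h' | h' <;> [exact hi.1 h'; exact hi.2 h']
          rw [hc i hik] at hi
          simp [Finset.mem_erase, hik, hi.1, hi.2]
        calc (Finset.univ.filter (fun i => c i ≠ 0 ∧ c i ≠ ubar i)).card
            ≤ ((Finset.univ.filter (fun i => u i ≠ 0 ∧ u i ≠ ubar i)).erase k).card :=
              Finset.card_le_card hss
          _ = (Finset.univ.filter (fun i => u i ≠ 0 ∧ u i ≠ ubar i)).card - 1 :=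
              Finset.card_erase_of_mem hkmem
          _ ≤ m := by omega
      have hVa : V a < V ubar := by
        apply ih a ha_mem ⟨j, by simp [ha_def, Function.update_of_ne hjk, hj]⟩
        exact hsub a (fun i hik => Function.update_of_ne hik _ _) (Or.inr (by simp [ha_def]))
      have hVb : V b < V ubar := by
        apply ih b hb_mem ⟨k, by simp [hb_def]⟩
        exact hsub b (fun i hik => Function.update_of_ne hik _ _) (Or.inl (by simp [hb_def]))
      have := hV a b (fun i => ⟨(ha_mem i).1, (ha_mem i).2.trans (hubar i).2⟩)
        (fun i => ⟨(hb_mem i).1, (hb_mem i).2.trans (hubar i).2⟩) l hl0.le hl1.le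
      rw [← hcomb] at this
      exact lt_of_le_of_lt this (max_lt hVa hVb)
    · push_neg at h
      obtain ⟨j, hj⟩ := hex
      have hall : ∀ i, u i = ubar i ∨ u i = 0 := by
        intro i
        by_cases h0 : u i = 0
        · exact Or.inr h0
        · exact Or.inl (h i h0)
      exact hmax u (fun i => ⟨(hu i).1, (hu i).2.trans (hubar i).2⟩)
        (fun h' => (hubar j).1.ne' (h' ▸ hj)) hall

/-- **Lemma (Optimistic point for quasiconvex functions).**
Let `V` be quasiconvex on `[0,1]^n` and `ū ∈ (0,1]^n` be such that `V u < V ū` for every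
`u ∈ [0,1]^n` different from `ū` whose coordinates satisfy `u i = ū i` or `u i = 0`.
Then `V u' ≥ V ū` for every `u' ∈ [0,1]^n` with `u' ≥ ū` coordinatewise. -/
theorem quasiconvex_monotone_point (n : ℕ) (hn : 1 ≤ n) (V : (Fin n → ℝ) → ℝ)
    (hV : ∀ x y : Fin n → ℝ, (∀ i, x i ∈ Set.Icc (0:ℝ) 1) → (∀ i, y i ∈ Set.Icc (0:ℝ) 1) →
      ∀ l : ℝ, 0 ≤ l → l ≤ 1 → V (l • x + (1 - l) • y) ≤ max (V x) (V y))
    (ubar : Fin n → ℝ) (hubar : ∀ i, 0 < ubar i ∧ ubar i ≤ 1)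
    (hmax : ∀ u : Fin n → ℝ, (∀ i, u i ∈ Set.Icc (0:ℝ) 1) → u ≠ ubar →
      (∀ i, u i = ubar i ∨ u i = 0) → V u < V ubar) :
    ∀ u' : Fin n → ℝ, (∀ i, u' i ∈ Set.Icc (0:ℝ) 1) → (∀ i, ubar i ≤ u' i) →
      V ubar ≤ V u' := by
  intro u' hu' hge
  have hne : Nonempty (Fin n) := ⟨⟨0, hn⟩⟩
  have hu'pos : ∀ i, 0 < u' i := fun i => lt_of_lt_of_le (hubar i).1 (hge i)
  set t := Finset.univ.inf' Finset.univ_nonempty (fun i => ubar i / u' i) with ht_def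
  obtain ⟨j, -, hj⟩ := Finset.exists_mem_eq_inf' Finset.univ_nonempty (fun i => ubar i / u' i)
  have htle : ∀ i, t ≤ ubar i / u' i := fun i => Finset.inf'_le _ (Finset.mem_univ i)
  have ht0 : 0 < t := by
    rw [ht_def, hj]; exact div_pos (hubar j).1 (hu'pos j)
  have ht1 : t ≤ 1 := by
    rw [ht_def, hj]; exact (div_le_one (hu'pos j)).mpr (hge j)
  rcases eq_or_lt_of_le ht1 with heq | hlt
  · -- t = 1 : then u' = ubar
    have : u' = ubar := by
      funext i
      have h1 : (1:ℝ) ≤ ubar i / u' i := heq ▸ htle i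
      have := (one_le_div (hu'pos i)).mp h1
      linarith [hge i]
    rw [this]
  · -- t < 1
    set w : Fin n → ℝ := fun i => (ubar i - t * u' i) / (1 - t) with hw_def
    have h1t : (0:ℝ) < 1 - t := by linarith
    have hwnum : ∀ i, 0 ≤ ubar i - t * u' i := by
      intro i
      have := (le_div_iff₀ (hu'pos i)).mp (htle i)
      linarith
    have hw0 : ∀ i, 0 ≤ w i := fun i => div_nonneg (hwnum i) h1t.le
    have hwub : ∀ i, w i ≤ ubar i := by
      intro i
      rw [hw_def, div_le_iff₀ h1t]
      have : t * ubar i ≤ t * u' i := mul_le_mul_of_nonneg_left (hge i) ht0.le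
      ring_nf
      nlinarith
    have hwj : w j = 0 := by
      rw [hw_def]
      have : t * u' j = ubar j := by
        rw [ht_def, hj, div_mul_cancel₀ _ (hu'pos j).ne']
      simp [this]
    have hcomb : ubar = t • u' + (1 - t) • w := by
      funext i
      simp only [Pi.add_apply, Pi.smul_apply, smul_eq_mul, hw_def]
      field_simp
      ring
    have hVw : V w < V ubar :=
      quasiconvex_key_lemma n V hV ubar hubar hmax n w (fun i => ⟨hw0 i, hwub i⟩)
        ⟨j, hwj⟩ (le_trans (Finset.card_le_card (Finset.filter_subset _ _))
          (by simp))
    have := hV u' w hu' (fun i => ⟨hw0 i, (hwub i).trans (hubar i).2⟩) t ht0.le hlt.le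
    rw [← hcomb] at this
    rcases le_max_iff.mp this with h | h
    · exact h
    · linarith
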